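/- Let G be a digraph, f a discrete Morse function on G, and α a non-critical allowed elementary path. Writing α = β_1*γ_1*⋯*γ_{k−1}*β_k as the canonical concatenation of simplicial allowed elementary paths β_i and directed loops γ_i, there exists some β_i which is non-critical (with respect to the restriction of f). -/

import Mathlib

/-- A digraph: a vertex set together with an irreflexive edge relation supported on the
vertex set (edges are ordered pairs off the diagonal). -/
structure DiGraph (V : Type) where
  verts : Set V
  Edge : V → V → Prop
  edge_mem_left : ∀ u v, Edge u v → u ∈ verts
  edge_mem_right : ∀ u v, Edge u v → v ∈ verts
  edge_ne : ∀ u v, Edge u v → u ≠ v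

variable {V : Type}

/-- An allowed elementary path: a nonempty list of vertices of `G` such that each
consecutive pair is a directed edge of `G`. -/
def IsAllowed (G : DiGraph V) (p : List V) : Prop :=
  p ≠ [] ∧ (∀ v ∈ p, v ∈ G.verts) ∧ p.Chain' G.Edge

/-- `Del p q` : `p` is obtained from `q` by deleting one vertex. -/
def Del (p q : List V) : Prop := ∃ i < q.length, p = q.eraseIdx i

/-- Value of a function on vertices extended to a path: the sum over its vertices. -/
def fval (f : V → ℝ) (p : List V) : ℝ := (p.map f).sum

/-- A discrete Morse function on a digraph `G`: a nonnegative function on vertices such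
that for every allowed elementary path `p` there is (i) at most one allowed elementary
path obtained from `p` by deleting one vertex with the same `f`-value, and (ii) at most
one allowed elementary path obtained from `p` by inserting one vertex with the same
`f`-value. -/
def IsMorse (G : DiGraph V) (f : V → ℝ) : Prop :=
  (∀ v, 0 ≤ f v) ∧
  ∀ p, IsAllowed G p →
    ((∀ β β', IsAllowed G β → Del β p → fval f β = fval f p →
        IsAllowed G β' → Del β' p → fval f β' = fval f p → β = β') ∧
     (∀ α α', IsAllowed G α → Del p α → fval f α = fval f p →
        IsAllowed G α' → Del p α' → fval f α' = fval f p → α = α'))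

/-- An allowed elementary path is critical if no allowed path obtained by deleting one
vertex has the same `f`-value, and no allowed path obtained by inserting one vertex has
the same `f`-value. -/
def IsCritical (G : DiGraph V) (f : V → ℝ) (p : List V) : Prop :=
  (¬ ∃ β, IsAllowed G β ∧ Del β p ∧ fval f β = fval f p) ∧
  (¬ ∃ α, IsAllowed G α ∧ Del p α ∧ fval f α = fval f p)

/-- A directed loop: an allowed elementary path `v₀ v₁ ⋯ vₙ v₀` with `n ≥ 1`. -/
def IsLoop (G : DiGraph V) (p : List V) : Prop :=
  IsAllowed G p ∧ 3 ≤ p.length ∧ p.head? = p.getLast?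

/-- A simplicial allowed elementary path: all vertices distinct. -/
def Simplicial (G : DiGraph V) (p : List V) : Prop := IsAllowed G p ∧ p.Nodup

/-- A pair of the combinatorial discrete gradient vector field `M(G,f)`:
`β` is obtained from `α` by inserting one vertex, and `f(α) = f(β)`. -/
def MPair (G : DiGraph V) (f : V → ℝ) (α β : List V) : Prop :=
  IsAllowed G α ∧ IsAllowed G β ∧ Del α β ∧ fval f α = fval f β

/-- `H` is a sub-digraph of `G`. -/
def Subdigraph (H G : DiGraph V) : Prop :=
  H.verts ⊆ G.verts ∧ ∀ u v, H.Edge u v → G.Edge u v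

/-- Glue (concatenate) a path with a list of further paths, identifying the last vertex
of each piece with the first vertex of the next. -/
def glueAll : List V → List (List V) → List V
  | p, [] => p
  | p, q :: rest => glueAll (p ++ q.tail) rest

/-- `L = [β₁, γ₁, β₂, γ₂, …, β_k]` is a decomposition of the allowed elementary path `α`
as a concatenation `β₁*γ₁*β₂*⋯*β_k` of simplicial allowed elementary paths `βᵢ`
(possibly single vertices) and directed loops `γᵢ`. -/
def IsDecomp (G : DiGraph V) (α : List V) (L : List (List V)) : Prop :=
  L ≠ [] ∧ L.length % 2 = 1 ∧
  (∀ i : Fin L.length, if i.val % 2 = 0 then Simplicial G (L.get i) else IsLoop G (L.get i)) ∧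
  (∀ i : Fin L.length, ∀ h : i.val + 1 < L.length,
    (L.get i).getLast? = (L.get ⟨i.val + 1, h⟩).head?) ∧
  glueAll L.headI L.tail = α

/-- A decomposition produced by the greedy algorithm that cuts at the first repeated
vertex: each simplicial piece, extended by the interior of the following loop, is still
duplicate-free. -/
def GreedyDecomp (G : DiGraph V) (α : List V) (L : List (List V)) : Prop :=
  IsDecomp G α L ∧
  ∀ i : Fin L.length, i.val % 2 = 0 →
    (if h : i.val + 1 < L.length
      then ((L.get i) ++ (L.get ⟨i.val + 1, h⟩).tail.dropLast).Nodup
      else (L.get i).Nodup)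


-- ### auxiliary lemmas ###

theorem fval_nil (f : V → ℝ) : fval f ([] : List V) = 0 := by simp [fval]

theorem fval_cons (f : V → ℝ) (a : V) (l : List V) : fval f (a :: l) = f a + fval f l := by
  simp [fval]

theorem fval_append (f : V → ℝ) (l m : List V) : fval f (l ++ m) = fval f l + fval f m := by
  simp [fval]

theorem eraseIdx_append_cons (P : List V) (x : V) (R : List V) :
    (P ++ x :: R).eraseIdx P.length = P ++ R := by
  induction P with
  | nil => simp [List.eraseIdx]
  | cons a P ih => simpa [List.eraseIdx] using ih

theorem Del_mid (P : List V) (x : V) (R : List V) : Del (P ++ R) (P ++ x :: R) := by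
  refine ⟨P.length, by simp, (eraseIdx_append_cons P x R).symm⟩

theorem glueAll_append (p : List V) (r s : List (List V)) :
    glueAll p (r ++ s) = glueAll (glueAll p r) s := by
  induction r generalizing p with
  | nil => simp [glueAll]
  | cons q r ih => simp [glueAll, ih]

theorem glueAll_pair (p : List V) (x y : List V) :
    glueAll p [x, y] = p ++ x.tail ++ y.tail := by
  simp [glueAll]

theorem glueAll_prefix (p : List V) (rest : List (List V)) :
    p <+: glueAll p rest := by
  induction rest generalizing p with
  | nil => simp [glueAll]
  | cons q r ih =>
    exact (List.prefix_append p q.tail).trans (ih _)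

theorem glueAll_ne_nil (p : List V) (rest : List (List V)) (hp : p ≠ []) :
    glueAll p rest ≠ [] := by
  intro h
  have := glueAll_prefix p rest
  rw [h] at this
  exact hp (List.prefix_nil.mp this)

theorem glueAll_head? (p : List V) (rest : List (List V)) (hp : p ≠ []) :
    (glueAll p rest).head? = p.head? := by
  induction rest generalizing p with
  | nil => rfl
  | cons q r ih =>
    show (glueAll (p ++ q.tail) r).head? = p.head?
    rw [ih _ (by simp [hp]), List.head?_append_of_ne_nil _ hp]

theorem glueAll_getLast? (rest : List (List V)) (p : List V) (hp : p ≠ [])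
    (hne : ∀ q ∈ rest, q ≠ [])
    (hj : List.Chain' (fun x y : List V => x.getLast? = y.head?) (p :: rest)) :
    (glueAll p rest).getLast? = (rest.getLastD p).getLast? := by
  induction rest generalizing p with
  | nil => rfl
  | cons q r ih =>
    show (glueAll (p ++ q.tail) r).getLast? = _
    have hq : q ≠ [] := hne q (by simp)
    have hjpq : p.getLast? = q.head? := by
      rcases List.isChain_cons.mp hj with ⟨h1, _⟩
      exact h1 q rfl
    have hlast : (p ++ q.tail).getLast? = q.getLast? := by
      cases q with
      | nil => exact absurd rfl hq
      | cons a t =>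
        cases t with
        | nil => simpa using hjpq
        | cons b t' =>
          simp only [List.tail_cons]
          rw [List.getLast?_append_of_ne_nil p (List.cons_ne_nil b t')]
          simp
    have hj' : List.Chain' (fun x y : List V => x.getLast? = y.head?) ((p ++ q.tail) :: r) := by
      rcases List.isChain_cons.mp hj with ⟨_, hj2⟩
      rcases List.isChain_cons.mp hj2 with ⟨h2, hj3⟩
      exact List.isChain_cons.mpr ⟨fun y hy => by rw [hlast]; exact h2 y hy, hj3⟩
    rw [ih (p ++ q.tail) (by simp [hp]) (fun q' hq' => hne q' (by simp [hq'])) hj']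
    cases r with
    | nil => simpa using hlast
    | cons s r' =>
      obtain ⟨z, hz⟩ := Option.isSome_iff_exists.mp (List.getLast?_isSome.mpr (List.cons_ne_nil s r'))
      simp [List.getLastD_eq_getLast?, hz]

theorem not_critical_del {G : DiGraph V} {f : V → ℝ} {p β : List V}
    (hβ : IsAllowed G β) (hd : Del β p) (he : fval f β = fval f p) :
    ¬ IsCritical G f p := fun hc => hc.1 ⟨β, hβ, hd, he⟩

theorem not_critical_ins {G : DiGraph V} {f : V → ℝ} {p δ : List V}
    (hδ : IsAllowed G δ) (hd : Del p δ) (he : fval f δ = fval f p) :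
    ¬ IsCritical G f p := fun hc => hc.2 ⟨δ, hδ, hd, he⟩

theorem W_erase_mid {G : DiGraph V} {f : V → ℝ} {M N : List V} {u w v : V}
    (hp : IsAllowed G (M ++ u :: w :: v :: N)) (he : G.Edge u v) (hw : f w = 0) :
    ¬ IsCritical G f (M ++ u :: w :: v :: N) := by
  obtain ⟨hne, hmem, hch⟩ := hp
  have hrw : M ++ u :: w :: v :: N = (M ++ [u]) ++ w :: v :: N := by simp
  rw [hrw] at hch hmem ⊢
  obtain ⟨c1, c2, _⟩ := List.isChain_append.mp hch
  refine not_critical_del (β := (M ++ [u]) ++ v :: N) ⟨by simp, ?_, ?_⟩ (Del_mid _ _ _) ?_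
  · intro x hx; apply hmem; rcases List.mem_append.mp hx with h | h
    · exact List.mem_append.mpr (Or.inl h)
    · exact List.mem_append.mpr (Or.inr (List.mem_cons_of_mem _ h))
  · refine List.isChain_append.mpr ⟨c1, (List.isChain_cons.mp c2).2, ?_⟩
    intro x hx y hy
    simp at hx hy
    subst_vars; exact he
  · simp [fval_append, fval_cons, fval_nil, hw]

theorem W_ins_mid {G : DiGraph V} {f : V → ℝ} {M N : List V} {u v : V} (w : V)
    (hp : IsAllowed G (M ++ u :: v :: N)) (h1 : G.Edge u w) (h2 : G.Edge w v)
    (hwv : w ∈ G.verts) (hw : f w = 0) :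
    ¬ IsCritical G f (M ++ u :: v :: N) := by
  obtain ⟨hne, hmem, hch⟩ := hp
  have hrw : M ++ u :: v :: N = (M ++ [u]) ++ v :: N := by simp
  rw [hrw] at hch hmem ⊢
  obtain ⟨c1, c2, _⟩ := List.isChain_append.mp hch
  refine not_critical_ins (δ := (M ++ [u]) ++ w :: v :: N) ⟨by simp, ?_, ?_⟩ (Del_mid _ _ _) ?_
  · intro x hx; rcases List.mem_append.mp hx with h | h
    · exact hmem _ (List.mem_append.mpr (Or.inl h))
    · rcases List.mem_cons.mp h with h | h
      · exact h ▸ hwv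
      · exact hmem _ (List.mem_append.mpr (Or.inr h))
  · refine List.isChain_append.mpr ⟨c1, List.isChain_cons.mpr ⟨?_, c2⟩, ?_⟩
    · intro y hy; cases hy; exact h2
    · intro x hx y hy; simp at hx hy; subst_vars; exact h1
  · simp [fval_append, fval_cons, fval_nil, hw]

theorem W_head_del {G : DiGraph V} {f : V → ℝ} {R : List V} {w c : V}
    (hp : IsAllowed G (w :: c :: R)) (hw : f w = 0) :
    ¬ IsCritical G f (w :: c :: R) := by
  obtain ⟨hne, hmem, hch⟩ := hp
  refine not_critical_del (β := c :: R) ⟨by simp, ?_, (List.isChain_cons.mp hch).2⟩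
    ⟨0, by simp, rfl⟩ ?_
  · intro x hx; exact hmem _ (List.mem_cons_of_mem _ hx)
  · simp [fval_cons, hw]

theorem W_last_del {G : DiGraph V} {f : V → ℝ} {Z : List V} {w : V} (hZ : Z ≠ [])
    (hp : IsAllowed G (Z ++ [w])) (hw : f w = 0) :
    ¬ IsCritical G f (Z ++ [w]) := by
  obtain ⟨hne, hmem, hch⟩ := hp
  refine not_critical_del (β := Z) ⟨hZ, ?_, (List.isChain_append.mp hch).1⟩
    ⟨Z.length, by simp, ?_⟩ ?_
  · intro x hx; exact hmem _ (List.mem_append.mpr (Or.inl hx))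
  · simpa using (eraseIdx_append_cons Z w []).symm
  · simp [fval_append, fval_cons, fval_nil, hw]

theorem W_head_ins {G : DiGraph V} {f : V → ℝ} {p : List V} (w : V)
    (hp : IsAllowed G p) (hE : ∀ y ∈ p.head?, G.Edge w y) (hwv : w ∈ G.verts) (hw : f w = 0) :
    ¬ IsCritical G f p := by
  obtain ⟨hne, hmem, hch⟩ := hp
  refine not_critical_ins (δ := w :: p) ⟨by simp, ?_, ?_⟩ ⟨0, by simp, rfl⟩ ?_
  · intro x hx; rcases List.mem_cons.mp hx with h | h
    · exact h ▸ hwv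
    · exact hmem _ h
  · exact List.isChain_cons.mpr ⟨hE, hch⟩
  · simp [fval_cons, hw]

theorem W_last_ins {G : DiGraph V} {f : V → ℝ} {p : List V} (w : V)
    (hp : IsAllowed G p) (hE : ∀ x ∈ p.getLast?, G.Edge x w) (hwv : w ∈ G.verts) (hw : f w = 0) :
    ¬ IsCritical G f p := by
  obtain ⟨hne, hmem, hch⟩ := hp
  refine not_critical_ins (δ := p ++ [w]) ⟨by simp, ?_, ?_⟩
    ⟨p.length, by simp, by simpa using (eraseIdx_append_cons p w []).symm⟩ ?_
  · intro x hx; rcases List.mem_append.mp hx with h | h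
    · exact hmem _ h
    · simp at h; exact h ▸ hwv
  · refine List.isChain_append.mpr ⟨hch, by simp, ?_⟩
    intro x hx y hy
    simp at hy; subst hy
    exact hE x hx
  · simp [fval_append, fval_cons, fval_nil, hw]

theorem subset_mid (P R : List V) (c : V) : ∀ x ∈ P ++ R, x ∈ P ++ c :: R := by
  intro x hx
  rcases List.mem_append.mp hx with h | h
  · exact List.mem_append.mpr (Or.inl h)
  · exact List.mem_append.mpr (Or.inr (List.mem_cons_of_mem _ h))

/-- A loop whose basepoint has value `0` contradicts Morseness. -/
theorem LZ {G : DiGraph V} {f : V → ℝ} (hf : IsMorse G f) {γ : List V} (hγ : IsLoop G γ)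
    {w : V} (hh : γ.head? = some w) (hw : f w = 0) : False := by
  obtain ⟨⟨hne, hmem, hch⟩, hlen, hho⟩ := hγ
  obtain ⟨a, t, rfl⟩ : ∃ a t, γ = a :: t := by
    cases γ with
    | nil => simp at hlen
    | cons a t => exact ⟨a, t, rfl⟩
  obtain ⟨c, R, rfl⟩ : ∃ c R, t = c :: R := by
    cases t with
    | nil => simp at hlen
    | cons c R => exact ⟨c, R, rfl⟩
  obtain rfl : w = a := by cases hh; rfl
  have hR : R ≠ [] := by intro h; subst h; simp at hlen
  have hlast : (c :: R).getLast? = some w := by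
    rw [hho] at hh
    rw [show (w :: c :: R) = [w] ++ (c :: R) by simp,
      List.getLast?_append_of_ne_nil _ (List.cons_ne_nil c R)] at hh
    exact hh
  have hEwc : G.Edge w c := (List.isChain_cons.mp hch).1 c rfl
  have hch2 : (c :: R).Chain' G.Edge := (List.isChain_cons.mp hch).2
  set q : List V := (w :: c :: R) ++ (c :: R) with hq
  have hqch : q.Chain' G.Edge := by
    refine List.isChain_append.mpr ⟨hch, hch2, ?_⟩
    intro x hx y hy
    rw [show (w :: c :: R).getLast? = some w by
      rw [show (w :: c :: R) = [w] ++ (c :: R) by simp,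
        List.getLast?_append_of_ne_nil _ (List.cons_ne_nil c R)]; exact hlast] at hx
    cases hx; cases hy; exact hEwc
  have hqmem : ∀ x ∈ q, x ∈ G.verts := by
    intro x hx
    rcases List.mem_append.mp hx with h | h
    · exact hmem _ h
    · exact hmem _ (List.mem_cons_of_mem _ h)
  have hqall : IsAllowed G q := ⟨by simp [hq], hqmem, hqch⟩
  -- first deletion : drop the head
  have h1all : IsAllowed G ((c :: R) ++ (c :: R)) := by
    refine ⟨by simp, fun x hx => hqmem x (List.mem_cons_of_mem _ (by simpa using hx)), ?_⟩
    refine List.isChain_append.mpr ⟨hch2, hch2, ?_⟩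
    intro x hx y hy
    rw [hlast] at hx; cases hx; cases hy; exact hEwc
  have h1del : Del ((c :: R) ++ (c :: R)) q := ⟨0, by simp [hq], by simp [hq, List.eraseIdx]⟩
  have h1fv : fval f ((c :: R) ++ (c :: R)) = fval f q := by
    simp [hq, fval_append, fval_cons, hw]
  -- second deletion : drop the final vertex
  have hdl : (c :: R).dropLast ++ [w] = c :: R := by
    have h := List.dropLast_append_getLast (l := c :: R) (by simp)
    rwa [show (c :: R).getLast (by simp) = w by
      have := List.getLast?_eq_getLast (l := c :: R) (by simp)
      rw [this] at hlast; exact (Option.some_injective _ hlast)] at h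
  have hq2 : q = ((w :: c :: R) ++ (c :: R).dropLast) ++ [w] := by
    rw [List.append_assoc, hdl]
  have h2all : IsAllowed G ((w :: c :: R) ++ (c :: R).dropLast) := by
    refine ⟨by simp, ?_, ?_⟩
    · intro x hx
      apply hqmem
      rw [hq2]
      exact List.mem_append.mpr (Or.inl hx)
    · have := hqch
      rw [hq2] at this
      exact (List.isChain_append.mp this).1
  have h2del : Del ((w :: c :: R) ++ (c :: R).dropLast) q := by
    refine ⟨((w :: c :: R) ++ (c :: R).dropLast).length, ?_, ?_⟩
    · rw [hq2]; simp
    · rw [hq2]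
      simpa using (eraseIdx_append_cons ((w :: c :: R) ++ (c :: R).dropLast) w []).symm
  have h2fv : fval f ((w :: c :: R) ++ (c :: R).dropLast) = fval f q := by
    rw [hq2]
    simp [fval_append, fval_cons, fval_nil, hw]
  have := (hf.2 q hqall).1 _ _ h1all h1del h1fv h2all h2del h2fv
  have hcw : c = w := by
    have h0 := congrArg List.head? this
    simpa using h0
  exact (G.edge_ne _ _ hEwc) hcw.symm
/-- A loop containing an interior vertex of value 0 whose neighbours are joined by an
edge contradicts Morseness. -/
theorem LS {G : DiGraph V} {f : V → ℝ} (hf : IsMorse G f) {γ M N : List V} {A w B : V}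
    (hγ : IsLoop G γ) (hdec : γ = M ++ A :: w :: B :: N) (hE : G.Edge A B)
    (hw : f w = 0) : False := by
  obtain ⟨⟨hne, hmem, hch⟩, hlen, hho⟩ := hγ
  subst hdec
  cases M with
  | nil =>
    simp only [List.nil_append] at hne hmem hch hho ⊢
    -- γ = A :: w :: B :: N
    have hgl : (B :: N).getLast? = some A := by
      rw [show (A :: w :: B :: N) = [A, w] ++ (B :: N) by simp,
        List.getLast?_append_of_ne_nil _ (List.cons_ne_nil B N)] at hho
      simpa using hho.symm
    have hAw : G.Edge A w := (List.isChain_cons.mp hch).1 w rfl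
    have hch1 := (List.isChain_cons.mp hch).2
    have hwB : G.Edge w B := (List.isChain_cons.mp hch1).1 B rfl
    have hchBN : (B :: N).Chain' G.Edge := (List.isChain_cons.mp hch1).2
    set q : List V := (A :: w :: B :: N) ++ (w :: B :: N) with hq
    have e1 : q = [A] ++ w :: ((B :: N) ++ (w :: B :: N)) := by simp [hq]
    have e2 : q = (A :: w :: B :: N) ++ w :: (B :: N) := by simp [hq]
    have hqmem : ∀ x ∈ q, x ∈ G.verts := by
      intro x hx
      rcases List.mem_append.mp hx with h | h
      · exact hmem _ h
      · exact hmem _ (List.mem_cons_of_mem _ h)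
    have hqch : q.Chain' G.Edge := by
      refine List.isChain_append.mpr ⟨hch, hch1, ?_⟩
      intro x hx y hy
      rw [show (A :: w :: B :: N).getLast? = (B :: N).getLast? by
        rw [show (A :: w :: B :: N) = [A, w] ++ (B :: N) by simp,
          List.getLast?_append_of_ne_nil _ (List.cons_ne_nil B N)], hgl] at hx
      cases hx; cases hy; exact hAw
    have hqall : IsAllowed G q := ⟨by simp [hq], hqmem, hqch⟩
    have h1all : IsAllowed G ([A] ++ ((B :: N) ++ (w :: B :: N))) := by
      refine ⟨by simp, ?_, ?_⟩
      · intro x hx; apply hqmem; rw [e1]; exact subset_mid _ _ _ x hx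
      · refine List.isChain_append.mpr ⟨by simp, ?_, ?_⟩
        · refine List.isChain_append.mpr ⟨hchBN, hch1, ?_⟩
          intro x hx y hy
          rw [hgl] at hx; cases hx; cases hy; exact hAw
        · intro x hx y hy
          simp at hx
          rw [List.head?_append_of_ne_nil _ (List.cons_ne_nil B N)] at hy
          cases hy; subst hx; exact hE
    have h1del : Del ([A] ++ ((B :: N) ++ (w :: B :: N))) q := by
      rw [e1]; exact Del_mid _ _ _
    have h1fv : fval f ([A] ++ ((B :: N) ++ (w :: B :: N))) = fval f q := by
      simp [hq, fval_append, fval_cons, fval_nil, hw]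
    have h2all : IsAllowed G ((A :: w :: B :: N) ++ (B :: N)) := by
      refine ⟨by simp, ?_, ?_⟩
      · intro x hx; apply hqmem; rw [e2]; exact subset_mid _ _ _ x hx
      · refine List.isChain_append.mpr ⟨hch, hchBN, ?_⟩
        intro x hx y hy
        rw [show (A :: w :: B :: N).getLast? = (B :: N).getLast? by
          rw [show (A :: w :: B :: N) = [A, w] ++ (B :: N) by simp,
            List.getLast?_append_of_ne_nil _ (List.cons_ne_nil B N)], hgl] at hx
        cases hx; cases hy; exact hE
    have h2del : Del ((A :: w :: B :: N) ++ (B :: N)) q := by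
      rw [e2]; exact Del_mid _ _ _
    have h2fv : fval f ((A :: w :: B :: N) ++ (B :: N)) = fval f q := by
      simp [hq, fval_append, fval_cons, fval_nil, hw]
    have heq := (hf.2 q hqall).1 _ _ h1all h1del h1fv h2all h2del h2fv
    have e3 : [A] ++ ((B :: N) ++ (w :: B :: N)) = [A] ++ B :: (N ++ (w :: B :: N)) := by simp
    have e4 : (A :: w :: B :: N) ++ (B :: N) = [A] ++ w :: ((B :: N) ++ (B :: N)) := by simp
    rw [e3, e4] at heq
    have := List.append_cancel_left heq
    have hBw : B = w := by injection this
    exact (G.edge_ne _ _ hwB) hBw.symm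
  | cons m M' =>
    -- γ = m :: M' ++ A :: w :: B :: N
    have hh : (m :: M' ++ A :: w :: B :: N).head? = some m := by simp
    have hgl' : (m :: M' ++ A :: w :: B :: N).getLast? = some m := by rw [← hho, hh]
    have hgl : (B :: N).getLast? = some m := by
      rw [show (m :: M' ++ A :: w :: B :: N) = (m :: M' ++ [A, w]) ++ (B :: N) by simp,
        List.getLast?_append_of_ne_nil _ (List.cons_ne_nil B N)] at hgl'
      exact hgl'
    have hEm : ∀ y ∈ (M' ++ A :: w :: B :: N).head?, G.Edge m y :=
      (List.isChain_cons.mp hch).1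
    have hchT : (M' ++ A :: w :: B :: N).Chain' G.Edge := (List.isChain_cons.mp hch).2
    have hchX : (m :: M' ++ [A]).Chain' G.Edge := by
      have := hch
      rw [show (m :: M' ++ A :: w :: B :: N) = (m :: M' ++ [A]) ++ (w :: B :: N) by simp] at this
      exact (List.isChain_append.mp this).1
    have hXlast : (m :: M' ++ [A]).getLast? = some A := by
      rw [show m :: M' ++ [A] = (m :: M') ++ [A] by simp, List.getLast?_concat]
    have hAw : G.Edge A w := by
      have := hch
      rw [show (m :: M' ++ A :: w :: B :: N) = (m :: M' ++ [A]) ++ (w :: B :: N) by simp] at this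
      exact (List.isChain_append.mp this).2.2 A (by rw [hXlast]; rfl) w rfl
    have hchwBN : (w :: B :: N).Chain' G.Edge := by
      have := hch
      rw [show (m :: M' ++ A :: w :: B :: N) = (m :: M' ++ [A]) ++ (w :: B :: N) by simp] at this
      exact (List.isChain_append.mp this).2.1
    have hwB : G.Edge w B := (List.isChain_cons.mp hchwBN).1 B rfl
    have hchBN : (B :: N).Chain' G.Edge := (List.isChain_cons.mp hchwBN).2
    set q : List V := (m :: M' ++ A :: w :: B :: N) ++ (M' ++ A :: w :: B :: N) with hq
    have e1 : q = (m :: M' ++ [A]) ++ w :: ((B :: N) ++ (M' ++ A :: w :: B :: N)) := by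
      simp [hq]
    have e2 : q = ((m :: M' ++ A :: w :: B :: N) ++ M' ++ [A]) ++ w :: (B :: N) := by
      simp [hq]
    have hqmem : ∀ x ∈ q, x ∈ G.verts := by
      intro x hx
      rcases List.mem_append.mp hx with h | h
      · exact hmem _ h
      · exact hmem _ (List.mem_cons_of_mem _ h)
    have hqch : q.Chain' G.Edge := by
      refine List.isChain_append.mpr ⟨hch, hchT, ?_⟩
      intro x hx y hy
      rw [hgl'] at hx; cases hx; exact hEm y hy
    have hqall : IsAllowed G q := ⟨by simp [hq], hqmem, hqch⟩
    have h1all : IsAllowed G ((m :: M' ++ [A]) ++ ((B :: N) ++ (M' ++ A :: w :: B :: N))) := by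
      refine ⟨by simp, ?_, ?_⟩
      · intro x hx; apply hqmem; rw [e1]; exact subset_mid _ _ _ x hx
      · refine List.isChain_append.mpr ⟨hchX, ?_, ?_⟩
        · refine List.isChain_append.mpr ⟨hchBN, hchT, ?_⟩
          intro x hx y hy
          rw [hgl] at hx; cases hx; exact hEm y hy
        · intro x hx y hy
          rw [hXlast] at hx
          rw [List.head?_append_of_ne_nil _ (List.cons_ne_nil B N)] at hy
          cases hx; cases hy; exact hE
    have h1del : Del ((m :: M' ++ [A]) ++ ((B :: N) ++ (M' ++ A :: w :: B :: N))) q := by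
      rw [e1]; exact Del_mid _ _ _
    have h1fv : fval f ((m :: M' ++ [A]) ++ ((B :: N) ++ (M' ++ A :: w :: B :: N))) = fval f q := by
      simp [hq, fval_append, fval_cons, fval_nil, hw]
    have h2all : IsAllowed G (((m :: M' ++ A :: w :: B :: N) ++ M' ++ [A]) ++ (B :: N)) := by
      refine ⟨by simp, ?_, ?_⟩
      · intro x hx; apply hqmem; rw [e2]; exact subset_mid _ _ _ x hx
      · have hchP2 : ((m :: M' ++ A :: w :: B :: N) ++ M' ++ [A]).Chain' G.Edge := by
          have := hqch
          rw [e2] at this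
          exact (List.isChain_append.mp this).1
        refine List.isChain_append.mpr ⟨hchP2, hchBN, ?_⟩
        intro x hx y hy
        rw [show ((m :: M' ++ A :: w :: B :: N) ++ M' ++ [A]).getLast? = some A by
          rw [List.getLast?_append_of_ne_nil _ (by simp : ([A] : List V) ≠ [])]; simp] at hx
        cases hx; cases hy; exact hE
    have h2del : Del (((m :: M' ++ A :: w :: B :: N) ++ M' ++ [A]) ++ (B :: N)) q := by
      rw [e2]; exact Del_mid _ _ _
    have h2fv : fval f (((m :: M' ++ A :: w :: B :: N) ++ M' ++ [A]) ++ (B :: N)) = fval f q := by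
      simp [hq, fval_append, fval_cons, fval_nil, hw]
    have heq := (hf.2 q hqall).1 _ _ h1all h1del h1fv h2all h2del h2fv
    have e3 : (m :: M' ++ [A]) ++ ((B :: N) ++ (M' ++ A :: w :: B :: N)) =
        (m :: M' ++ [A]) ++ B :: (N ++ M' ++ A :: w :: B :: N) := by simp
    have e4 : ((m :: M' ++ A :: w :: B :: N) ++ M' ++ [A]) ++ (B :: N) =
        (m :: M' ++ [A]) ++ w :: ((B :: N) ++ M' ++ [A] ++ (B :: N)) := by simp
    rw [e3, e4] at heq
    have := List.append_cancel_left heq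
    have hBw : B = w := by injection this
    exact (G.edge_ne _ _ hwB) hBw.symm
theorem mem_ins (P R : List V) (w : V) : ∀ x ∈ P ++ w :: R, x = w ∨ x ∈ P ++ R := by
  intro x hx
  rcases List.mem_append.mp hx with h | h
  · exact Or.inr (List.mem_append.mpr (Or.inl h))
  · rcases List.mem_cons.mp h with h | h
    · exact Or.inl h
    · exact Or.inr (List.mem_append.mpr (Or.inr h))

/-- A vertex of value 0 insertable inside a loop contradicts Morseness. -/
theorem TwoIns {G : DiGraph V} {f : V → ℝ} (hf : IsMorse G f) {γ M N : List V} {A B : V}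
    (w : V) (hγ : IsLoop G γ) (hdec : γ = M ++ A :: B :: N) (h1 : G.Edge A w)
    (h2 : G.Edge w B) (hwv : w ∈ G.verts) (hw : f w = 0) : False := by
  obtain ⟨⟨hne, hmem, hch⟩, hlen, hho⟩ := hγ
  subst hdec
  cases M with
  | nil =>
    simp only [List.nil_append] at hne hmem hch hho ⊢
    have hgl : (B :: N).getLast? = some A := by
      rw [show (A :: B :: N) = [A] ++ (B :: N) by simp,
        List.getLast?_append_of_ne_nil _ (List.cons_ne_nil B N)] at hho
      simpa using hho.symm
    have hAB : G.Edge A B := (List.isChain_cons.mp hch).1 B rfl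
    have hchBN : (B :: N).Chain' G.Edge := (List.isChain_cons.mp hch).2
    set q : List V := (A :: B :: N) ++ (B :: N) with hq
    have e1 : q = [A] ++ ((B :: N) ++ (B :: N)) := by simp [hq]
    have hglγ : (A :: B :: N).getLast? = some A := by
      rw [show (A :: B :: N) = [A] ++ (B :: N) by simp,
        List.getLast?_append_of_ne_nil _ (List.cons_ne_nil B N)]
      exact hgl
    have hqmem : ∀ x ∈ q, x ∈ G.verts := by
      intro x hx
      rcases List.mem_append.mp hx with h | h
      · exact hmem _ h
      · exact hmem _ (List.mem_cons_of_mem _ h)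
    have hqch : q.Chain' G.Edge := by
      refine List.isChain_append.mpr ⟨hch, hchBN, ?_⟩
      intro x hx y hy
      rw [hglγ] at hx; cases hx; cases hy; exact hAB
    have hqall : IsAllowed G q := ⟨by simp [hq], hqmem, hqch⟩
    have hchBB : ((B :: N) ++ (B :: N)).Chain' G.Edge := by
      refine List.isChain_append.mpr ⟨hchBN, hchBN, ?_⟩
      intro x hx y hy
      rw [hgl] at hx; cases hx; cases hy; exact hAB
    have d1all : IsAllowed G ([A] ++ w :: ((B :: N) ++ (B :: N))) := by
      refine ⟨by simp, ?_, ?_⟩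
      · intro x hx
        rcases mem_ins _ _ _ x hx with h | h
        · exact h ▸ hwv
        · exact hqmem x (by rw [e1]; exact h)
      · refine List.isChain_append.mpr ⟨by simp, ?_, ?_⟩
        · exact List.isChain_cons.mpr ⟨by intro y hy; rw [List.head?_append_of_ne_nil _
            (List.cons_ne_nil B N)] at hy; cases hy; exact h2, hchBB⟩
        · intro x hx y hy; simp at hx; cases hy; subst hx; exact h1
    have d1del : Del q ([A] ++ w :: ((B :: N) ++ (B :: N))) := by
      rw [e1]; exact Del_mid _ _ _
    have d1fv : fval f ([A] ++ w :: ((B :: N) ++ (B :: N))) = fval f q := by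
      simp [hq, fval_append, fval_cons, fval_nil, hw]
    have d2all : IsAllowed G ((A :: B :: N) ++ w :: (B :: N)) := by
      refine ⟨by simp, ?_, ?_⟩
      · intro x hx
        rcases mem_ins _ _ _ x hx with h | h
        · exact h ▸ hwv
        · exact hqmem x h
      · refine List.isChain_append.mpr ⟨hch, ?_, ?_⟩
        · exact List.isChain_cons.mpr ⟨by intro y hy; cases hy; exact h2, hchBN⟩
        · intro x hx y hy
          rw [hglγ] at hx; cases hx; cases hy; exact h1
    have d2del : Del q ((A :: B :: N) ++ w :: (B :: N)) := Del_mid _ _ _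
    have d2fv : fval f ((A :: B :: N) ++ w :: (B :: N)) = fval f q := by
      simp [hq, fval_append, fval_cons, fval_nil, hw]
    have heq := (hf.2 q hqall).2 _ _ d1all d1del d1fv d2all d2del d2fv
    have e3 : [A] ++ w :: ((B :: N) ++ (B :: N)) = [A] ++ w :: ((B :: N) ++ (B :: N)) := rfl
    have e4 : (A :: B :: N) ++ w :: (B :: N) = [A] ++ B :: (N ++ (w :: B :: N)) := by simp
    rw [e4] at heq
    have := List.append_cancel_left heq
    have hwB : w = B := by injection this
    exact (G.edge_ne _ _ h2) hwB
  | cons m M' =>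
    have hh : (m :: M' ++ A :: B :: N).head? = some m := by simp
    have hgl' : (m :: M' ++ A :: B :: N).getLast? = some m := by rw [← hho, hh]
    have hgl : (B :: N).getLast? = some m := by
      rw [show (m :: M' ++ A :: B :: N) = (m :: M' ++ [A]) ++ (B :: N) by simp,
        List.getLast?_append_of_ne_nil _ (List.cons_ne_nil B N)] at hgl'
      exact hgl'
    have hEm : ∀ y ∈ (M' ++ A :: B :: N).head?, G.Edge m y := (List.isChain_cons.mp hch).1
    have hchT : (M' ++ A :: B :: N).Chain' G.Edge := (List.isChain_cons.mp hch).2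
    have hXlast : (m :: M' ++ [A]).getLast? = some A := by
      rw [show m :: M' ++ [A] = (m :: M') ++ [A] by simp, List.getLast?_concat]
    have hchX : (m :: M' ++ [A]).Chain' G.Edge := by
      have := hch
      rw [show (m :: M' ++ A :: B :: N) = (m :: M' ++ [A]) ++ (B :: N) by simp] at this
      exact (List.isChain_append.mp this).1
    have hAB : G.Edge A B := by
      have := hch
      rw [show (m :: M' ++ A :: B :: N) = (m :: M' ++ [A]) ++ (B :: N) by simp] at this
      exact (List.isChain_append.mp this).2.2 A (by rw [hXlast]; rfl) B rfl
    have hchBN : (B :: N).Chain' G.Edge := by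
      have := hch
      rw [show (m :: M' ++ A :: B :: N) = (m :: M' ++ [A]) ++ (B :: N) by simp] at this
      exact (List.isChain_append.mp this).2.1
    set q : List V := (m :: M' ++ A :: B :: N) ++ (M' ++ A :: B :: N) with hq
    have e1 : q = (m :: M' ++ [A]) ++ ((B :: N) ++ (M' ++ A :: B :: N)) := by simp [hq]
    have e2 : q = ((m :: M' ++ A :: B :: N) ++ M' ++ [A]) ++ (B :: N) := by simp [hq]
    have hqmem : ∀ x ∈ q, x ∈ G.verts := by
      intro x hx
      rcases List.mem_append.mp hx with h | h
      · exact hmem _ h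
      · exact hmem _ (List.mem_cons_of_mem _ h)
    have hqch : q.Chain' G.Edge := by
      refine List.isChain_append.mpr ⟨hch, hchT, ?_⟩
      intro x hx y hy
      rw [hgl'] at hx; cases hx; exact hEm y hy
    have hqall : IsAllowed G q := ⟨by simp [hq], hqmem, hqch⟩
    have hchBT : ((B :: N) ++ (M' ++ A :: B :: N)).Chain' G.Edge := by
      refine List.isChain_append.mpr ⟨hchBN, hchT, ?_⟩
      intro x hx y hy
      rw [hgl] at hx; cases hx; exact hEm y hy
    have d1all : IsAllowed G ((m :: M' ++ [A]) ++ w :: ((B :: N) ++ (M' ++ A :: B :: N))) := by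
      refine ⟨by simp, ?_, ?_⟩
      · intro x hx
        rcases mem_ins _ _ _ x hx with h | h
        · exact h ▸ hwv
        · exact hqmem x (by rw [e1]; exact h)
      · refine List.isChain_append.mpr ⟨hchX, ?_, ?_⟩
        · refine List.isChain_cons.mpr ⟨?_, hchBT⟩
          intro y hy
          rw [List.head?_append_of_ne_nil _ (List.cons_ne_nil B N)] at hy
          cases hy; exact h2
        · intro x hx y hy
          rw [hXlast] at hx; cases hx; cases hy; exact h1
    have d1del : Del q ((m :: M' ++ [A]) ++ w :: ((B :: N) ++ (M' ++ A :: B :: N))) := by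
      rw [e1]; exact Del_mid _ _ _
    have d1fv : fval f ((m :: M' ++ [A]) ++ w :: ((B :: N) ++ (M' ++ A :: B :: N))) = fval f q := by
      simp [hq, fval_append, fval_cons, fval_nil, hw]
    have hP2last : ((m :: M' ++ A :: B :: N) ++ M' ++ [A]).getLast? = some A := by
      rw [List.getLast?_append_of_ne_nil _ (by simp : ([A] : List V) ≠ [])]; simp
    have hchP2 : ((m :: M' ++ A :: B :: N) ++ M' ++ [A]).Chain' G.Edge := by
      have := hqch
      rw [e2] at this
      exact (List.isChain_append.mp this).1
    have d2all : IsAllowed G (((m :: M' ++ A :: B :: N) ++ M' ++ [A]) ++ w :: (B :: N)) := by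
      refine ⟨by simp, ?_, ?_⟩
      · intro x hx
        rcases mem_ins _ _ _ x hx with h | h
        · exact h ▸ hwv
        · exact hqmem x (by rw [e2]; exact h)
      · refine List.isChain_append.mpr ⟨hchP2, ?_, ?_⟩
        · refine List.isChain_cons.mpr ⟨?_, hchBN⟩
          intro y hy; cases hy; exact h2
        · intro x hx y hy
          rw [hP2last] at hx; cases hx; cases hy; exact h1
    have d2del : Del q (((m :: M' ++ A :: B :: N) ++ M' ++ [A]) ++ w :: (B :: N)) := by
      rw [e2]; exact Del_mid _ _ _
    have d2fv : fval f (((m :: M' ++ A :: B :: N) ++ M' ++ [A]) ++ w :: (B :: N)) = fval f q := by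
      simp [hq, fval_append, fval_cons, fval_nil, hw]
    have heq := (hf.2 q hqall).2 _ _ d1all d1del d1fv d2all d2del d2fv
    have e4 : ((m :: M' ++ A :: B :: N) ++ M' ++ [A]) ++ w :: (B :: N) =
        (m :: M' ++ [A]) ++ B :: (N ++ M' ++ [A] ++ (w :: B :: N)) := by simp
    rw [e4] at heq
    have := List.append_cancel_left heq
    have hwB : w = B := by injection this
    exact (G.edge_ne _ _ h2) hwB
theorem triple_decomp {l : List V} {s : ℕ} {u w v : V} (hu : l[s]? = some u)
    (hw : l[s+1]? = some w) (hv : l[s+2]? = some v) :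
    l = l.take s ++ u :: w :: v :: l.drop (s+3) := by
  obtain ⟨h1, hu'⟩ := List.getElem?_eq_some_iff.mp hu
  obtain ⟨h2, hw'⟩ := List.getElem?_eq_some_iff.mp hw
  obtain ⟨h3, hv'⟩ := List.getElem?_eq_some_iff.mp hv
  conv_lhs => rw [← List.take_append_drop s l]
  congr 1
  rw [List.drop_eq_getElem_cons h1, List.drop_eq_getElem_cons h2,
    List.drop_eq_getElem_cons h3, hu', hw', hv']

theorem pair_decomp {l : List V} {s : ℕ} {u v : V} (hu : l[s]? = some u)
    (hv : l[s+1]? = some v) :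
    l = l.take s ++ u :: v :: l.drop (s+2) := by
  obtain ⟨h1, hu'⟩ := List.getElem?_eq_some_iff.mp hu
  obtain ⟨h2, hv'⟩ := List.getElem?_eq_some_iff.mp hv
  conv_lhs => rw [← List.take_append_drop s l]
  congr 1
  rw [List.drop_eq_getElem_cons h1, List.drop_eq_getElem_cons h2, hu', hv']

theorem exists_append_two {L : List (List V)} (h : 2 ≤ L.length) :
    ∃ L' x y, L = L' ++ [x, y] := by
  induction L using List.reverseRecOn with
  | nil => simp at h
  | append_singleton M y ih =>
    cases M using List.reverseRecOn with
    | nil => simp at h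
    | append_singleton M' x _ => exact ⟨M', x, y, by simp⟩
theorem getLast?_tail_of_ne_nil {l : List V} (h : l.tail ≠ []) :
    l.tail.getLast? = l.getLast? := by
  cases l with
  | nil => simp at h
  | cons a t =>
    simp only [List.tail_cons] at h ⊢
    rw [show a :: t = [a] ++ t by simp, List.getLast?_append_of_ne_nil _ h]

theorem decomp_step (n : ℕ) (L : List (List V)) (α : List V)
    (hlen : L.length = 2 * n + 3)
    (hne : ∀ p ∈ L, p ≠ [])
    (hloops : ∀ (i : ℕ) (l : List V), i % 2 = 1 → L[i]? = some l →
      2 ≤ l.length ∧ l.head? = l.getLast?)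
    (hjunc : List.Chain' (fun x y : List V => x.getLast? = y.head?) L)
    (hglue : glueAll L.headI L.tail = α) :
    ∃ (L' : List (List V)) (γ β α' : List V),
      L = L' ++ [γ, β] ∧ L'.length = 2 * n + 1 ∧ glueAll L'.headI L'.tail = α' ∧
      α' ≠ [] ∧ α = α' ++ (γ.tail ++ β.tail) ∧ α'.getLast? = γ.head? ∧
      γ.getLast? = β.head? ∧ 2 ≤ γ.length ∧ γ.head? = γ.getLast? ∧
      (∀ p ∈ L', p ≠ []) ∧
      (∀ (i : ℕ) (l : List V), i % 2 = 1 → L'[i]? = some l →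
        2 ≤ l.length ∧ l.head? = l.getLast?) ∧
      List.Chain' (fun x y : List V => x.getLast? = y.head?) L' ∧
      (∀ i : ℕ, i < L'.length → L[i]? = L'[i]?) ∧
      L[L'.length]? = some γ ∧ L[L'.length + 1]? = some β := by
  obtain ⟨L', γ, β, rfl⟩ := exists_append_two (L := L) (by omega)
  have hlen' : L'.length = 2 * n + 1 := by
    simp only [List.length_append, List.length_cons, List.length_nil] at hlen
    omega
  obtain ⟨z, L'', rfl⟩ : ∃ z L'', L' = z :: L'' := by
    cases L' with
    | nil => simp at hlen'
    | cons z L'' => exact ⟨z, L'', rfl⟩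
  have hidx : ∀ i : ℕ, i < (z :: L'').length → ((z :: L'') ++ [γ, β])[i]? = (z :: L'')[i]? :=
    fun i hi => List.getElem?_append_left hi
  have hγi : ((z :: L'') ++ [γ, β])[(z :: L'').length]? = some γ := by
    rw [List.getElem?_append_right (le_refl _)]
    simp
  have hβi : ((z :: L'') ++ [γ, β])[(z :: L'').length + 1]? = some β := by
    rw [List.getElem?_append_right (by omega)]
    simp
  have hzne : z ≠ [] := hne z (by simp)
  have hne' : ∀ p ∈ z :: L'', p ≠ [] := by
    intro p hp
    apply hne p
    rcases List.mem_cons.mp hp with h | h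
    · exact h ▸ List.mem_cons_self
    · exact List.mem_cons_of_mem _ (List.mem_append.mpr (Or.inl h))
  obtain ⟨hjL', hj2, hj3⟩ := List.isChain_append.mp hjunc
  have hγβ : γ.getLast? = β.head? := (List.isChain_cons.mp hj2).1 β rfl
  have hγloop := hloops (z :: L'').length γ (by rw [hlen']; omega) hγi
  have hα'last : (glueAll z L'').getLast? = γ.head? := by
    rw [glueAll_getLast? L'' z hzne (fun q hq => hne' q (by simp [hq]))
      (by exact hjL')]
    have := hj3 (L''.getLastD z) (by rw [List.getLast?_cons, List.getLastD_eq_getLast?]; rfl) γ rfl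
    exact this
  refine ⟨z :: L'', γ, β, glueAll z L'', rfl, hlen', rfl, glueAll_ne_nil _ _ hzne, ?_, hα'last,
    hγβ, hγloop.1, hγloop.2, hne', ?_, hjL', hidx, hγi, hβi⟩
  · rw [← hglue]
    show glueAll z (L'' ++ [γ, β]) = _
    rw [glueAll_append, glueAll_pair]
    simp
  · intro i l hi hl
    have hilt : i < (z :: L'').length := (List.getElem?_eq_some_iff.mp hl).1
    exact hloops i l hi (by rw [hidx i hilt]; exact hl)
theorem tripleClassify : ∀ (n : ℕ) (L : List (List V)) (α : List V),
    L.length = 2 * n + 1 →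
    (∀ p ∈ L, p ≠ []) →
    (∀ (i : ℕ) (l : List V), i % 2 = 1 → L[i]? = some l →
      2 ≤ l.length ∧ l.head? = l.getLast?) →
    List.Chain' (fun x y : List V => x.getLast? = y.head?) L →
    glueAll L.headI L.tail = α →
    ∀ (j : ℕ) (u w v : V), α[j]? = some u → α[j+1]? = some w → α[j+2]? = some v →
    (∃ (i : ℕ) (l M N : List V), L[i]? = some l ∧ l = M ++ u :: w :: v :: N) ∨
    (∃ (i : ℕ) (l : List V), i % 2 = 1 ∧ L[i]? = some l ∧ l.head? = some w) := by
  intro n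
  induction n with
  | zero =>
    intro L α hlen hne hloops hjunc hglue j u w v hu hw hv
    obtain ⟨l, rfl⟩ := List.length_eq_one_iff.mp (by simpa using hlen)
    have hα : l = α := hglue
    subst hα
    exact Or.inl ⟨0, l, l.take j, l.drop (j+3), by simp, triple_decomp hu hw hv⟩
  | succ n ih =>
    intro L α hlen hne hloops hjunc hglue j u w v hu hw hv
    obtain ⟨L', γ, β, α', hL, hlen', hglue', hα'ne, hα, hα'g, hγβ, hγ2, hγho, hne', hloops',
      hjunc', hidx, hγi, hβi⟩ :=
      decomp_step n L α (by omega) hne hloops hjunc hglue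
    set T := γ.tail with hT
    set S := β.tail with hS
    set a := α'.length with ha
    set g := T.length with hg
    have hg1 : 1 ≤ g := by
      rw [hg, hT, List.length_tail]
      omega
    have hup : ∀ k, k < a → α[k]? = α'[k]? := by
      intro k hk
      rw [hα]
      exact List.getElem?_append_left hk
    have hdown : ∀ p, α[a + p]? = (T ++ S)[p]? := by
      intro p
      rw [hα, List.getElem?_append_right (by omega)]
      congr 1
      omega
    have hTp : ∀ p, T[p]? = γ[p+1]? := fun p => List.getElem?_tail (l := γ) (i := p)
    have hSp : ∀ p, S[p]? = β[p+1]? := fun p => List.getElem?_tail (l := β) (i := p)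
    have hTS1 : ∀ p, p < g → (T ++ S)[p]? = γ[p+1]? := by
      intro p hp
      rw [List.getElem?_append_left hp, hTp]
    have hTS2 : ∀ p, (T ++ S)[g + p]? = β[p+1]? := by
      intro p
      rw [List.getElem?_append_right (by omega)]
      rw [show g + p - T.length = p by rw [← hg]; omega, hSp]
    have hα'g0 : α'.getLast? = γ[0]? := by
      rw [hα'g, List.head?_eq_getElem?]
    have hα'last : α'.getLast? = α'[a-1]? := by
      rw [List.getLast?_eq_getElem?]
    have hLparity : L'.length % 2 = 1 := by omega
    have hcases : j+2 < a ∨ j+2 = a ∨ (a ≤ j+1 ∧ j+2 < a+g) ∨ (a ≤ j+1 ∧ j+2 = a+g) ∨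
        a+g ≤ j+1 := by omega
    rcases hcases with hc | hc | ⟨hc1, hc2⟩ | ⟨hc1, hc2⟩ | hc
    · -- entirely inside α'
      have r := ih L' α' hlen' hne' hloops' hjunc' hglue' j u w v
        (by rw [← hup j (by omega)]; exact hu)
        (by rw [← hup (j+1) (by omega)]; exact hw)
        (by rw [← hup (j+2) (by omega)]; exact hv)
      rcases r with ⟨i, l, M, N, hi, hdec⟩ | ⟨i, l, hpar, hi, hh⟩
      · exact Or.inl ⟨i, l, M, N, by
          rw [hidx i (List.getElem?_eq_some_iff.mp hi).1]; exact hi, hdec⟩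
      · exact Or.inr ⟨i, l, hpar, by
          rw [hidx i (List.getElem?_eq_some_iff.mp hi).1]; exact hi, hh⟩
    · -- w is the junction α'/γ : the basepoint of γ
      refine Or.inr ⟨L'.length, γ, by omega, hγi, ?_⟩
      rw [hα'g.symm, hα'last, show a - 1 = j + 1 by omega, ← hup (j+1) (by omega)]
      exact hw
    · -- triple inside γ
      obtain ⟨s, hs⟩ : ∃ s, j + 1 = a + s := ⟨j + 1 - a, by omega⟩
      have hsg : s < g := by omega
      have hwγ : γ[s+1]? = some w := by
        rw [← hTS1 s hsg, ← hdown s, ← hs]; exact hw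
      have hvγ : γ[s+2]? = some v := by
        have : j + 2 = a + (s+1) := by omega
        rw [← hTS1 (s+1) (by omega), ← hdown (s+1), ← this]; exact hv
      have huγ : γ[s]? = some u := by
        cases s with
        | zero =>
          rw [← List.head?_eq_getElem?, ← hα'g, hα'last, show a - 1 = j by omega,
            ← hup j (by omega)]
          exact hu
        | succ s' =>
          have : j = a + s' := by omega
          rw [← hTS1 s' (by omega), ← hdown s', ← this]; exact hu
      exact Or.inl ⟨L'.length, γ, γ.take s, γ.drop (s+3), hγi, triple_decomp huγ hwγ hvγ⟩
    · -- w is the junction γ/β : again the basepoint of γ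
      refine Or.inr ⟨L'.length, γ, by omega, hγi, ?_⟩
      have hwT : T[g-1]? = some w := by
        rw [← List.getElem?_append_left (by omega : g - 1 < g), ← hdown (g-1),
          show a + (g-1) = j + 1 by omega]
        exact hw
      have hTne : γ.tail ≠ [] := by
        rw [← hT]
        exact List.length_pos_iff.mp (by omega)
      have hgw : γ.getLast? = some w := by
        rw [← getLast?_tail_of_ne_nil hTne, ← hT, List.getLast?_eq_getElem?, ← hg]
        exact hwT
      rw [hγho]
      exact hgw
    · -- triple inside β
      obtain ⟨p, hp⟩ : ∃ p, j + 1 = a + g + p := ⟨j + 1 - a - g, by omega⟩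
      have hwβ : β[p+1]? = some w := by
        rw [← hTS2 p, ← hdown (g+p), show a + (g+p) = j+1 by omega]; exact hw
      have hvβ : β[p+2]? = some v := by
        rw [← hTS2 (p+1), ← hdown (g+(p+1)), show a + (g+(p+1)) = j+2 by omega]; exact hv
      have huβ : β[p]? = some u := by
        cases p with
        | zero =>
          rw [← List.head?_eq_getElem?, ← hγβ]
          have hwT : T[g-1]? = some u := by
            rw [← List.getElem?_append_left (by omega : g - 1 < g), ← hdown (g-1),
              show a + (g-1) = j by omega]
            exact hu
          have hTne : γ.tail ≠ [] := by
            rw [← hT]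
            exact List.length_pos_iff.mp (by omega)
          rw [← getLast?_tail_of_ne_nil hTne, ← hT, List.getLast?_eq_getElem?, ← hg]
          exact hwT
        | succ p' =>
          rw [← hTS2 p', ← hdown (g+p'), show a + (g+p') = j by omega]; exact hu
      exact Or.inl ⟨L'.length + 1, β, β.take p, β.drop (p+3), hβi, triple_decomp huβ hwβ hvβ⟩
theorem pairClassify : ∀ (n : ℕ) (L : List (List V)) (α : List V),
    L.length = 2 * n + 1 →
    (∀ p ∈ L, p ≠ []) →
    (∀ (i : ℕ) (l : List V), i % 2 = 1 → L[i]? = some l →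
      2 ≤ l.length ∧ l.head? = l.getLast?) →
    List.Chain' (fun x y : List V => x.getLast? = y.head?) L →
    glueAll L.headI L.tail = α →
    ∀ (j : ℕ) (u v : V), α[j]? = some u → α[j+1]? = some v →
    (∃ (i : ℕ) (l M N : List V), L[i]? = some l ∧ l = M ++ u :: v :: N) := by
  intro n
  induction n with
  | zero =>
    intro L α hlen hne hloops hjunc hglue j u v hu hv
    obtain ⟨l, rfl⟩ := List.length_eq_one_iff.mp (by simpa using hlen)
    have hα : l = α := hglue
    subst hα
    exact ⟨0, l, l.take j, l.drop (j+2), by simp, pair_decomp hu hv⟩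
  | succ n ih =>
    intro L α hlen hne hloops hjunc hglue j u v hu hv
    obtain ⟨L', γ, β, α', hL, hlen', hglue', hα'ne, hα, hα'g, hγβ, hγ2, hγho, hne', hloops',
      hjunc', hidx, hγi, hβi⟩ :=
      decomp_step n L α (by omega) hne hloops hjunc hglue
    set T := γ.tail with hT
    set S := β.tail with hS
    set a := α'.length with ha
    set g := T.length with hg
    have hg1 : 1 ≤ g := by
      rw [hg, hT, List.length_tail]
      omega
    have hup : ∀ k, k < a → α[k]? = α'[k]? := by
      intro k hk
      rw [hα]
      exact List.getElem?_append_left hk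
    have hdown : ∀ p, α[a + p]? = (T ++ S)[p]? := by
      intro p
      rw [hα, List.getElem?_append_right (by omega)]
      congr 1
      omega
    have hTp : ∀ p, T[p]? = γ[p+1]? := fun p => List.getElem?_tail (l := γ) (i := p)
    have hSp : ∀ p, S[p]? = β[p+1]? := fun p => List.getElem?_tail (l := β) (i := p)
    have hTS1 : ∀ p, p < g → (T ++ S)[p]? = γ[p+1]? := by
      intro p hp
      rw [List.getElem?_append_left hp, hTp]
    have hTS2 : ∀ p, (T ++ S)[g + p]? = β[p+1]? := by
      intro p
      rw [List.getElem?_append_right (by omega)]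
      rw [show g + p - T.length = p by rw [← hg]; omega, hSp]
    have hα'last : α'.getLast? = α'[a-1]? := by
      rw [List.getLast?_eq_getElem?]
    have hTlast : T.getLast? = T[g-1]? := by
      rw [List.getLast?_eq_getElem?]
    have hTne : γ.tail ≠ [] := by
      rw [← hT]
      exact List.length_pos_iff.mp (by omega)
    have hγlast : γ.getLast? = T[g-1]? := by
      rw [← getLast?_tail_of_ne_nil hTne, ← hT, hTlast]
    have hcases : j+1 < a ∨ j+1 = a ∨ (a ≤ j ∧ j+1 < a+g) ∨ (a ≤ j ∧ j+1 = a+g) ∨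
        a+g ≤ j := by omega
    rcases hcases with hc | hc | ⟨hc1, hc2⟩ | ⟨hc1, hc2⟩ | hc
    · -- inside α'
      obtain ⟨i, l, M, N, hi, hdec⟩ := ih L' α' hlen' hne' hloops' hjunc' hglue' j u v
        (by rw [← hup j (by omega)]; exact hu)
        (by rw [← hup (j+1) (by omega)]; exact hv)
      exact ⟨i, l, M, N, by rw [hidx i (List.getElem?_eq_some_iff.mp hi).1]; exact hi, hdec⟩
    · -- straddling the α'/γ junction
      have huγ : γ[0]? = some u := by
        rw [← List.head?_eq_getElem?, ← hα'g, hα'last, show a - 1 = j by omega,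
          ← hup j (by omega)]
        exact hu
      have hvγ : γ[1]? = some v := by
        rw [← hTS1 0 (by omega), ← hdown 0, show a + 0 = j + 1 by omega]
        exact hv
      exact ⟨L'.length, γ, γ.take 0, γ.drop 2, hγi, pair_decomp huγ hvγ⟩
    · -- inside γ
      obtain ⟨s, hs⟩ : ∃ s, j = a + s := ⟨j - a, by omega⟩
      have huγ : γ[s+1]? = some u := by
        rw [← hTS1 s (by omega), ← hdown s, ← hs]; exact hu
      have hvγ : γ[s+2]? = some v := by
        rw [← hTS1 (s+1) (by omega), ← hdown (s+1), show a + (s+1) = j+1 by omega]; exact hv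
      exact ⟨L'.length, γ, γ.take (s+1), γ.drop (s+3), hγi, pair_decomp huγ hvγ⟩
    · -- straddling the γ/β junction
      have huβ : β[0]? = some u := by
        rw [← List.head?_eq_getElem?, ← hγβ, hγlast,
          ← List.getElem?_append_left (by omega : g - 1 < g), ← hdown (g-1),
          show a + (g-1) = j by omega]
        exact hu
      have hvβ : β[1]? = some v := by
        rw [show (1 : ℕ) = 0 + 1 by rfl, ← hTS2 0, ← hdown (g+0),
          show a + (g+0) = j + 1 by omega]
        exact hv
      exact ⟨L'.length + 1, β, β.take 0, β.drop 2, hβi, pair_decomp huβ hvβ⟩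
    · -- inside β
      obtain ⟨p, hp⟩ : ∃ p, j = a + g + p := ⟨j - a - g, by omega⟩
      have huβ : β[p+1]? = some u := by
        rw [← hTS2 p, ← hdown (g+p), show a + (g+p) = j by omega]; exact hu
      have hvβ : β[p+2]? = some v := by
        rw [← hTS2 (p+1), ← hdown (g+(p+1)), show a + (g+(p+1)) = j+1 by omega]; exact hv
      exact ⟨L'.length + 1, β, β.take (p+1), β.drop (p+3), hβi, pair_decomp huβ hvβ⟩

theorem fw_zero {f : V → ℝ} {X Y : List V} {w : V}
    (h : fval f (X ++ Y) = fval f (X ++ w :: Y)) : f w = 0 := by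
  simp [fval_append, fval_cons] at h
  linarith


/-- Let `f` be a discrete Morse function on `G` and `α` a non-critical
allowed elementary path with canonical (greedy) decomposition
`α = β₁*γ₁*⋯*γ_{k−1}*β_k` into simplicial pieces (even positions of `L`) and directed
loops (odd positions). Then some simplicial piece `βᵢ` is non-critical. -/
theorem noncritical_piece (G : DiGraph V) (f : V → ℝ) (hf : IsMorse G f)
    (α : List V) (hα : IsAllowed G α) (hnc : ¬ IsCritical G f α)
    (L : List (List V)) (hL : GreedyDecomp G α L) :
    ∃ i : Fin L.length, i.val % 2 = 0 ∧ ¬ IsCritical G f (L.get i) := by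
  obtain ⟨⟨hLne, hLodd, hLpieces, hLjunc, hLglue⟩, _⟩ := hL
  obtain ⟨n, hlen⟩ : ∃ n, L.length = 2 * n + 1 := ⟨L.length / 2, by omega⟩
  have hallow : ∀ i : Fin L.length, IsAllowed G (L.get i) := by
    intro i
    have h := hLpieces i
    by_cases hp : i.val % 2 = 0
    · rw [if_pos hp] at h; exact h.1
    · rw [if_neg hp] at h; exact h.1
  have hne : ∀ p ∈ L, p ≠ [] := by
    intro p hp
    obtain ⟨i, hi⟩ := List.mem_iff_get.mp hp
    rw [← hi]
    exact (hallow i).1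
  have pieceSimp : ∀ (i : ℕ) (l : List V), i % 2 = 0 → L[i]? = some l → Simplicial G l := by
    intro i l hp hl
    obtain ⟨hlt, hEl⟩ := List.getElem?_eq_some_iff.mp hl
    have h := hLpieces ⟨i, hlt⟩
    rw [if_pos hp] at h
    rwa [List.get_eq_getElem, hEl] at h
  have pieceLoop : ∀ (i : ℕ) (l : List V), i % 2 = 1 → L[i]? = some l → IsLoop G l := by
    intro i l hp hl
    obtain ⟨hlt, hEl⟩ := List.getElem?_eq_some_iff.mp hl
    have h := hLpieces ⟨i, hlt⟩
    rw [if_neg (by have hv : (⟨i, hlt⟩ : Fin L.length).val = i := rfl; omega)] at h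
    rwa [List.get_eq_getElem, hEl] at h
  have hloops : ∀ (i : ℕ) (l : List V), i % 2 = 1 → L[i]? = some l →
      2 ≤ l.length ∧ l.head? = l.getLast? := by
    intro i l hp hl
    have h := pieceLoop i l hp hl
    exact ⟨by have := h.2.1; omega, h.2.2⟩
  have hjunc : List.Chain' (fun x y : List V => x.getLast? = y.head?) L := by
    apply List.isChain_iff_getElem.mpr
    intro k hk
    exact hLjunc ⟨k, by omega⟩ (by have hv : (⟨k, by omega⟩ : Fin L.length).val = k := rfl; omega)
  have mkGoal : ∀ (i : ℕ) (l : List V), i % 2 = 0 → L[i]? = some l →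
      ¬ IsCritical G f l → ∃ i : Fin L.length, i.val % 2 = 0 ∧ ¬ IsCritical G f (L.get i) := by
    intro i l hp hl hcr
    obtain ⟨hlt, hEl⟩ := List.getElem?_eq_some_iff.mp hl
    exact ⟨⟨i, hlt⟩, hp, by rw [List.get_eq_getElem, hEl]; exact hcr⟩
  obtain ⟨l0, Lt, rfl⟩ : ∃ l0 Lt, L = l0 :: Lt := by
    cases L with
    | nil => exact absurd rfl hLne
    | cons a b => exact ⟨a, b, rfl⟩
  have hglue0 : glueAll l0 Lt = α := hLglue
  have hl0i : (l0 :: Lt)[0]? = some l0 := by simp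
  have hl0ne : l0 ≠ [] := hne l0 (List.mem_cons_self)
  have hαhead : α.head? = l0.head? := by
    rw [← hglue0]
    exact glueAll_head? l0 Lt hl0ne
  set P : List V := Lt.getLastD l0 with hPdef
  have hαlast : α.getLast? = P.getLast? := by
    rw [← hglue0]
    exact glueAll_getLast? Lt l0 hl0ne (fun q hq => hne q (List.mem_cons_of_mem _ hq)) hjunc
  have hPidx : (l0 :: Lt)[(l0 :: Lt).length - 1]? = some P := by
    rw [← List.getLast?_eq_getElem?, List.getLast?_cons, hPdef, List.getLastD_eq_getLast?]
  have hPpar : ((l0 :: Lt).length - 1) % 2 = 0 := by omega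
  -- unfold non-criticality of α
  rw [IsCritical, not_and_or, not_not, not_not] at hnc
  rcases hnc with ⟨β', hβall, ⟨i, hi, heq⟩, hfv⟩ | ⟨δ, hδall, ⟨i, hi, heq⟩, hfv⟩
  · -- DELETION case
    obtain ⟨hβne, hβmem, hβch⟩ := hβall
    set X := α.take i with hX
    set Y := α.drop (i+1) with hY
    have hXlen : X.length = i := by rw [hX, List.length_take]; omega
    have hsplit : α = X ++ α[i] :: Y := by
      conv_lhs => rw [← List.take_append_drop i α]
      rw [List.drop_eq_getElem_cons hi]
    set w := α[i] with hwdef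
    have heq' : β' = X ++ Y := by rw [heq, List.eraseIdx_eq_take_drop_succ]
    have hfw : f w = 0 := by
      apply fw_zero (X := X) (Y := Y)
      rw [← heq', ← hsplit]
      exact hfv
    rcases List.eq_nil_or_concat X with hXnil | ⟨Z, x, hXc⟩
    · -- w is the head of α
      have hαw : α.head? = some w := by rw [hsplit, hXnil]; rfl
      have hl0w : l0.head? = some w := by rw [← hαhead]; exact hαw
      have hYne : Y ≠ [] := by rw [heq', hXnil] at hβne; simpa using hβne
      cases l0 with
      | nil => exact absurd rfl hl0ne
      | cons h0 t0 =>
        have hh0 : h0 = w := by cases hl0w; rfl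
        subst hh0
        cases t0 with
        | cons c R =>
          exact mkGoal 0 (w :: c :: R) rfl hl0i
            (W_head_del (pieceSimp 0 _ rfl hl0i).1 hfw)
        | nil =>
          -- l0 = [w] : the following loop starts at w
          obtain ⟨l1, Lt', rfl⟩ : ∃ l1 Lt', Lt = l1 :: Lt' := by
            cases Lt with
            | nil =>
              exfalso
              have : α = [w] := by rw [← hglue0]; rfl
              rw [this, hXnil] at hsplit
              simp at hsplit
              exact hYne hsplit
            | cons a b => exact ⟨a, b, rfl⟩
          have hj0 := hLjunc ⟨0, by simp⟩ (by simp)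
          simp only [List.get_eq_getElem] at hj0
          have hl1w : l1.head? = some w := by simpa using hj0.symm
          have hloop1 : IsLoop G l1 := pieceLoop 1 l1 rfl (by simp)
          exact absurd (LZ hf hloop1 hl1w hfw) (fun h => h)
    · -- X ≠ []
      have hXne : X ≠ [] := by rw [hXc]; simp
      obtain ⟨u, huX⟩ : ∃ u, X.getLast? = some u :=
        Option.isSome_iff_exists.mp (List.getLast?_isSome.mpr hXne)
      rcases List.eq_nil_or_concat' Y with hYnil | ⟨Y', y, hYc⟩
      · -- w is the last vertex of α
        have hαw : α.getLast? = some w := by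
          rw [hsplit, hYnil, List.getLast?_concat]
        have hPw : P.getLast? = some w := by rw [← hαlast]; exact hαw
        have hPsimp := pieceSimp ((l0 :: Lt).length - 1) P hPpar hPidx
        have hPne : P ≠ [] := hPsimp.1.1
        have hPsplit : P.dropLast ++ [w] = P := by
          have h := List.dropLast_append_getLast hPne
          rwa [show P.getLast hPne = w by
            have := List.getLast?_eq_getLast (l := P) hPne
            rw [this] at hPw
            exact Option.some_injective _ hPw] at h
        rcases List.eq_nil_or_concat P.dropLast with hZnil | ⟨Z0, z0, hZc⟩
        · -- P = [w] : previous loop ends at w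
          have hPw' : P = [w] := by rw [← hPsplit, hZnil]; rfl
          obtain ⟨l1, Lt', rfl⟩ : ∃ l1 Lt', Lt = l1 :: Lt' := by
            cases Lt with
            | nil =>
              exfalso
              have hPl0 : P = l0 := rfl
              have : α = [w] := by rw [← hglue0, show glueAll l0 [] = l0 from rfl, ← hPl0, hPw']
              rw [this] at hsplit
              have hlen1 := congrArg List.length hsplit
              simp at hlen1
              have hxp := List.length_pos_iff.mpr hXne
              omega
            | cons a b => exact ⟨a, b, rfl⟩
          set iN := (l0 :: l1 :: Lt').length - 1 with hiN
          have hA : (l0 :: l1 :: Lt').length = Lt'.length + 2 := by simp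
          have hlt : iN - 1 < (l0 :: l1 :: Lt').length := by omega
          have hlt2 : iN - 1 + 1 < (l0 :: l1 :: Lt').length := by omega
          obtain ⟨γp, hγpi⟩ : ∃ γp, (l0 :: l1 :: Lt')[iN - 1]? = some γp :=
            ⟨_, List.getElem?_eq_getElem hlt⟩
          have hloopP : IsLoop G γp := pieceLoop (iN - 1) γp (by omega) hγpi
          have hjN := hLjunc ⟨iN - 1, hlt⟩ hlt2
          have e1 : (l0 :: l1 :: Lt').get ⟨iN - 1, hlt⟩ = γp := by
            rw [List.get_eq_getElem]
            exact (List.getElem?_eq_some_iff.mp hγpi).2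
          have h1 : (l0 :: l1 :: Lt')[iN - 1 + 1]? = some P := by
            rw [show iN - 1 + 1 = iN by omega]
            exact hPidx
          have e2 : (l0 :: l1 :: Lt').get ⟨iN - 1 + 1, hlt2⟩ = P := by
            rw [List.get_eq_getElem]
            exact (List.getElem?_eq_some_iff.mp h1).2
          rw [e1, e2] at hjN
          have hheadw : γp.head? = some w := by
            rw [hloopP.2.2, hjN, hPw']
            rfl
          exact (LZ hf hloopP hheadw hfw).elim
        · -- P = Z0 ++ [z0] ++ [w] : delete the last vertex of P
          have hPform : P = (Z0 ++ [z0]) ++ [w] := by rw [← hPsplit, hZc]; simp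
          refine mkGoal ((l0 :: Lt).length - 1) P hPpar hPidx ?_
          rw [hPform]
          refine W_last_del (by simp) ?_ hfw
          rw [← hPform]
          exact hPsimp.1
      · -- interior : triple (u, w, y)
        have hi1 : 1 ≤ i := by
          have := List.length_pos_iff.mpr hXne
          omega
        obtain ⟨yh, Ytl, hYcons⟩ : ∃ yh Ytl, Y = yh :: Ytl :=
          List.exists_cons_of_ne_nil (by rw [hYc]; simp)
        have hEdge : G.Edge u yh := by
          rw [heq'] at hβch
          exact (List.isChain_append.mp hβch).2.2 u huX yh (by rw [hYcons]; rfl)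
        have hju : α[i-1]? = some u := by
          rw [hsplit, List.getElem?_append_left (by omega : i - 1 < X.length)]
          rw [← huX, List.getLast?_eq_getElem?, hXlen]
        have hjw : α[i-1+1]? = some w := by
          rw [show i - 1 + 1 = i by omega, hsplit,
            List.getElem?_append_right (by omega : X.length ≤ i)]
          rw [hXlen]
          simp
        have hjv : α[i-1+2]? = some yh := by
          rw [show i - 1 + 2 = i + 1 by omega, hsplit, hYcons,
            List.getElem?_append_right (by omega : X.length ≤ i + 1)]
          rw [hXlen]
          simp
        have r := tripleClassify n (l0 :: Lt) α hlen hne hloops hjunc hglue0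
          (i-1) u w yh hju hjw hjv
        rcases r with ⟨i0, l, M, N, hi0, hdec⟩ | ⟨i0, l, hpar, hi0, hh⟩
        · rcases Nat.even_or_odd i0 with he | ho
          · have hp0 : i0 % 2 = 0 := Nat.even_iff.mp he
            refine mkGoal i0 l hp0 hi0 ?_
            rw [hdec]
            refine W_erase_mid ?_ hEdge hfw
            rw [← hdec]
            exact (pieceSimp i0 l hp0 hi0).1
          · have hp1 : i0 % 2 = 1 := Nat.odd_iff.mp ho
            exact absurd (LS hf (pieceLoop i0 l hp1 hi0) hdec hEdge hfw) (fun h => h)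
        · exact absurd (LZ hf (pieceLoop i0 l hpar hi0) hh hfw) (fun h => h)
  · -- INSERTION case
    obtain ⟨hδne, hδmem, hδch⟩ := hδall
    set X := δ.take i with hX
    set Y := δ.drop (i+1) with hY
    have hXlen : X.length = i := by rw [hX, List.length_take]; omega
    have hsplit : δ = X ++ δ[i] :: Y := by
      conv_lhs => rw [← List.take_append_drop i δ]
      rw [List.drop_eq_getElem_cons hi]
    set w := δ[i] with hwdef
    have hαeq : α = X ++ Y := by rw [heq, List.eraseIdx_eq_take_drop_succ]
    have hfw : f w = 0 := by
      apply fw_zero (X := X) (Y := Y)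
      rw [← hαeq, ← hsplit]
      exact hfv.symm
    have hwv : w ∈ G.verts := by
      apply hδmem
      rw [hsplit]
      exact List.mem_append.mpr (Or.inr (List.mem_cons_self))
    rcases List.eq_nil_or_concat X with hXnil | ⟨Z, x, hXc⟩
    · -- insert at the head
      have hαY : α = Y := by rw [hαeq, hXnil]; rfl
      have hE : ∀ y ∈ α.head?, G.Edge w y := by
        rw [hsplit, hXnil] at hδch
        simp only [List.nil_append] at hδch
        intro y hy
        exact (List.isChain_cons.mp hδch).1 y (by rw [← hαY]; exact hy)
      have hEl0 : ∀ y ∈ l0.head?, G.Edge w y := by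
        intro y hy
        exact hE y (by rw [hαhead]; exact hy)
      exact mkGoal 0 l0 rfl hl0i
        (W_head_ins w (pieceSimp 0 l0 rfl hl0i).1 hEl0 hwv hfw)
    · have hXne : X ≠ [] := by rw [hXc]; simp
      obtain ⟨u, huX⟩ : ∃ u, X.getLast? = some u :=
        Option.isSome_iff_exists.mp (List.getLast?_isSome.mpr hXne)
      rcases List.eq_nil_or_concat' Y with hYnil | ⟨Y', y, hYc⟩
      · -- insert at the end
        have hαX : α = X := by rw [hαeq, hYnil]; simp
        have hE : ∀ x ∈ α.getLast?, G.Edge x w := by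
          rw [hsplit, hYnil] at hδch
          intro x hx
          exact (List.isChain_append.mp hδch).2.2 x (by rw [← hαX]; exact hx) w rfl
        have hEP : ∀ x ∈ P.getLast?, G.Edge x w := by
          intro x hx
          exact hE x (by rw [hαlast]; exact hx)
        exact mkGoal ((l0 :: Lt).length - 1) P hPpar hPidx
          (W_last_ins w (pieceSimp _ P hPpar hPidx).1 hEP hwv hfw)
      · -- insert in the middle
        have hi1 : 1 ≤ i := by
          have := List.length_pos_iff.mpr hXne
          omega
        obtain ⟨y0, Ytl, hYcons⟩ : ∃ y0 Ytl, Y = y0 :: Ytl :=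
          List.exists_cons_of_ne_nil (by rw [hYc]; simp)
        have hEu : G.Edge u w := by
          rw [hsplit] at hδch
          exact (List.isChain_append.mp hδch).2.2 u huX w rfl
        have hEwy : G.Edge w y0 := by
          rw [hsplit] at hδch
          exact (List.isChain_cons.mp (List.isChain_append.mp hδch).2.1).1 y0
            (by rw [hYcons]; rfl)
        have hju : α[i-1]? = some u := by
          rw [hαeq, List.getElem?_append_left (by omega : i - 1 < X.length)]
          rw [← huX, List.getLast?_eq_getElem?, hXlen]
        have hjv : α[i-1+1]? = some y0 := by
          rw [show i - 1 + 1 = i by omega, hαeq, hYcons,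
            List.getElem?_append_right (by omega : X.length ≤ i)]
          rw [hXlen]
          simp
        obtain ⟨i0, l, M, N, hi0, hdec⟩ := pairClassify n (l0 :: Lt) α hlen hne hloops hjunc
          hglue0 (i-1) u y0 hju hjv
        rcases Nat.even_or_odd i0 with he | ho
        · have hp0 : i0 % 2 = 0 := Nat.even_iff.mp he
          refine mkGoal i0 l hp0 hi0 ?_
          rw [hdec]
          refine W_ins_mid w ?_ hEu hEwy hwv hfw
          rw [← hdec]
          exact (pieceSimp i0 l hp0 hi0).1
        · have hp1 : i0 % 2 = 1 := Nat.odd_iff.mp ho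
          exact absurd (TwoIns hf w (pieceLoop i0 l hp1 hi0) hdec hEu hEwy hwv hfw)
            (fun h => h)
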